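/- (Contraction of the proximal point method toward equilibrium) Suppose f_{x̄} is α-strongly convex for some α > 0. Then for every x ∈ E, every η > 0, and every minimizer x⁺ over E of y ↦ f_x(y) + r(y) + (1/(2η))‖y − x‖², one has ‖x⁺ − x̄‖ ≤ ((1 + γηβ)/(1 + ηα))·‖x − x̄‖. In particular, if γβ/α < 1 the proximal point update contracts toward the equilibrium point x̄. -/

import Mathlib

open MeasureTheory Set

noncomputable section

open scoped RealInnerProductSpace

private lemma convexOn_affine_inner' {E : Type*} [NormedAddCommGroup E] [InnerProductSpace ℝ E]
    (x : E) (a b : ℝ) : ConvexOn ℝ univ fun y : E => a * ⟪y, x⟫ + b := by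
  refine ⟨convex_univ, fun y _ z _ p q hp hq hpq => le_of_eq ?_⟩
  simp only [smul_eq_mul, inner_add_left, real_inner_smul_left]
  linear_combination b * hpq.symm

private lemma limit_helper' {A B : ℝ} (hA : 0 ≤ A)
    (h : ∀ l : ℝ, 0 < l → l ≤ 1 → (1 - l) * A ≤ B) : A ≤ B := by
  rcases eq_or_lt_of_le hA with h0 | h0
  · have := h 1 one_pos le_rfl
    simpa [← h0] using this
  refine le_of_forall_pos_le_add fun ε hε => ?_
  have hl0 : 0 < min 1 (ε / A) := lt_min one_pos (div_pos hε h0)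
  have hl1 : min 1 (ε / A) ≤ 1 := min_le_left _ _
  have hkey := h _ hl0 hl1
  have hlA : min 1 (ε / A) * A ≤ ε := by
    have h2 : min 1 (ε / A) ≤ ε / A := min_le_right _ _
    calc min 1 (ε / A) * A ≤ (ε / A) * A := by nlinarith
    _ = ε := div_mul_cancel₀ _ (ne_of_gt h0)
  nlinarith

set_option maxHeartbeats 1000000 in
/-- **Contraction of repeated minimization toward equilibrium.** If `f_{xbar}` is `α`-strongly
convex, then any minimizer `xp` of `f_x + r` satisfies `‖xp − xbar‖ ≤ (γβ/α)‖x − xbar‖`. -/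
theorem repeated_minimization_contraction
    {E : Type*} [NormedAddCommGroup E] [InnerProductSpace ℝ E] [FiniteDimensional ℝ E]
    {Z : Type*} [MetricSpace Z] [MeasurableSpace Z] [BorelSpace Z]
    (ℓ : E → Z → ℝ) (G : E → Z → E) (β γ : ℝ) (hβ : 0 ≤ β) (hγ : 0 ≤ γ)
    (hgrad : ∀ (x : E) (z : Z), HasGradientAt (fun x' => ℓ x' z) (G x z) x)
    (hlip : ∀ (x : E) (z z' : Z), ‖G x z - G x z'‖ ≤ β * dist z z')
    (D : E → Measure Z) (hD : ∀ x : E, IsProbabilityMeasure (D x))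
    (hint : ∀ x y : E, Integrable (fun z => ℓ y z) (D x))
    (hintG : ∀ x y : E, Integrable (fun z => G y z) (D x))
    (f : E → E → ℝ) (Gf : E → E → E)
    (hfdef : ∀ x y : E, f x y = ∫ z, ℓ y z ∂(D x))
    (hGfdef : ∀ x y : E, Gf x y = ∫ z, G y z ∂(D x))
    (hfgrad : ∀ x y : E, HasGradientAt (f x) (Gf x y) y)
    (hDlip : ∀ x y : E, ∀ g : Z → ℝ, LipschitzWith 1 g →
      |(∫ z, g z ∂(D x)) - ∫ z, g z ∂(D y)| ≤ γ * ‖x - y‖)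
    (r : E → ℝ) (hr : ConvexOn ℝ univ r)
    (xbar : E) (hxbar : ∀ y : E, f xbar xbar + r xbar ≤ f xbar y + r y)
    (α : ℝ) (hα : 0 < α)
    (hsc : ConvexOn ℝ univ (fun y => f xbar y - α / 2 * ‖y‖ ^ 2))
    (x : E) (η : ℝ) (hη : 0 < η)
    (xp : E) (hxp : ∀ y : E, f x xp + r xp + 1 / (2 * η) * ‖xp - x‖ ^ 2
      ≤ f x y + r y + 1 / (2 * η) * ‖y - x‖ ^ 2) :
    ‖xp - xbar‖ ≤ ((1 + γ * η * β) / (1 + η * α)) * ‖x - xbar‖ := by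
  classical
  set s : ℝ := ‖x - xbar‖ with hs_def
  set t : ℝ := ‖xp - xbar‖ with ht_def
  have hs0 : 0 ≤ s := norm_nonneg _
  have ht0 : 0 ≤ t := norm_nonneg _
  set q : ℝ := 1 / (2 * η) with hq_def
  have hq0 : 0 < q := by rw [hq_def]; positivity
  -- Step 1: gradient bound
  have hgb : ∀ y : E, ‖Gf x y - Gf xbar y‖ ≤ γ * β * s := by
    intro y
    rw [hGfdef, hGfdef]
    rcases eq_or_lt_of_le hβ with hb0 | hb0
    · -- β = 0 : G y is constant
      have hZ : Nonempty Z := by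
        by_contra h
        rw [not_nonempty_iff] at h
        have h1 : (D x) univ = 1 := (hD x).measure_univ
        rw [Set.univ_eq_empty_iff.mpr h, measure_empty] at h1
        exact zero_ne_one h1
      obtain ⟨z0⟩ := hZ
      have hconst : (fun z => G y z) = fun _ => G y z0 := by
        funext z
        have h1 := hlip y z z0
        rw [← hb0, zero_mul] at h1
        have h2 : G y z - G y z0 = 0 := by
          rw [← norm_le_zero_iff]; exact h1
        exact sub_eq_zero.mp h2
      have hix : (∫ z, G y z ∂(D x)) = G y z0 := by
        rw [hconst]
        haveI := hD x
        simp
      have hixb : (∫ z, G y z ∂(D xbar)) = G y z0 := by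
        rw [hconst]
        haveI := hD xbar
        simp
      rw [hix, hixb, sub_self, norm_zero]
      positivity
    · -- β > 0
      set v : E := (∫ z, G y z ∂(D x)) - ∫ z, G y z ∂(D xbar) with hv_def
      rcases eq_or_ne v 0 with h0 | h0
      · rw [h0, norm_zero]; positivity
      set u : E := ‖v‖⁻¹ • v with hu_def
      have hu : ‖u‖ = 1 := norm_smul_inv_norm h0
      have hvu : ⟪u, v⟫ = ‖v‖ := by
        rw [hu_def, real_inner_smul_left, real_inner_self_eq_norm_sq]
        have hvne : ‖v‖ ≠ 0 := norm_ne_zero_iff.mpr h0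
        field_simp
      set g1 : Z → ℝ := fun z => β⁻¹ * ⟪u, G y z⟫ with hg1_def
      have hLip : LipschitzWith 1 g1 := by
        apply LipschitzWith.of_dist_le_mul
        intro z z'
        rw [Real.dist_eq, hg1_def]
        have h1 : β⁻¹ * ⟪u, G y z⟫ - β⁻¹ * ⟪u, G y z'⟫ = β⁻¹ * ⟪u, G y z - G y z'⟫ := by
          rw [inner_sub_right]; ring
        rw [h1, abs_mul, abs_of_pos (by positivity : (0:ℝ) < β⁻¹)]
        have h2 : |⟪u, G y z - G y z'⟫| ≤ ‖u‖ * ‖G y z - G y z'‖ := abs_real_inner_le_norm _ _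
        have h3 := hlip y z z'
        have h4 : |⟪u, G y z - G y z'⟫| ≤ β * dist z z' := by
          calc |⟪u, G y z - G y z'⟫| ≤ ‖u‖ * ‖G y z - G y z'‖ := h2
          _ = ‖G y z - G y z'‖ := by rw [hu, one_mul]
          _ ≤ β * dist z z' := h3
        push_cast
        calc β⁻¹ * |⟪u, G y z - G y z'⟫| ≤ β⁻¹ * (β * dist z z') := by
              apply mul_le_mul_of_nonneg_left h4 (by positivity)
        _ = dist z z' := by field_simp
        _ ≤ 1 * dist z z' := by rw [one_mul]
      have hkey := hDlip x xbar g1 hLip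
      have hi1 : (∫ z, g1 z ∂(D x)) = β⁻¹ * ⟪u, ∫ z, G y z ∂(D x)⟫ := by
        rw [hg1_def]
        rw [integral_const_mul, integral_inner (hintG x y)]
      have hi2 : (∫ z, g1 z ∂(D xbar)) = β⁻¹ * ⟪u, ∫ z, G y z ∂(D xbar)⟫ := by
        rw [hg1_def]
        rw [integral_const_mul, integral_inner (hintG xbar y)]
      rw [hi1, hi2] at hkey
      have h5 : β⁻¹ * ⟪u, ∫ z, G y z ∂(D x)⟫ - β⁻¹ * ⟪u, ∫ z, G y z ∂(D xbar)⟫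
          = β⁻¹ * ‖v‖ := by
        rw [← hvu, hv_def, inner_sub_right]; ring
      rw [h5, abs_mul, abs_of_pos (by positivity : (0:ℝ) < β⁻¹), abs_of_nonneg (norm_nonneg v)]
        at hkey
      calc ‖v‖ = β * (β⁻¹ * ‖v‖) := by field_simp
      _ ≤ β * (γ * s) := by apply mul_le_mul_of_nonneg_left hkey (le_of_lt hb0)
      _ = γ * β * s := by ring
  -- Step 2: e := f x - f xbar is (γβs)-Lipschitz
  have heLip : ∀ a b : E, |(f x a - f xbar a) - (f x b - f xbar b)| ≤ γ * β * s * ‖a - b‖ := by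
    intro a b
    have h := Convex.norm_image_sub_le_of_norm_hasFDerivWithin_le
      (f := fun y' => f x y' - f xbar y')
      (f' := fun y => (InnerProductSpace.toDual ℝ E) (Gf x y - Gf xbar y))
      (fun y _ => by
        have h1 := ((hfgrad x y).hasFDerivAt.sub (hfgrad xbar y).hasFDerivAt)
        have h2 : (InnerProductSpace.toDual ℝ E) (Gf x y) -
            (InnerProductSpace.toDual ℝ E) (Gf xbar y)
            = (InnerProductSpace.toDual ℝ E) (Gf x y - Gf xbar y) := by
          rw [map_sub]
        rw [h2] at h1
        exact h1.hasFDerivWithinAt)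
      (fun y _ => by
        rw [(InnerProductSpace.toDual ℝ E).norm_map]
        exact hgb y)
      convex_univ (mem_univ b) (mem_univ a)
    simpa [Real.norm_eq_abs] using h
  -- Step 3: strong convexity statements
  have hF : StrongConvexOn univ α (fun y => f xbar y + r y) := by
    rw [strongConvexOn_iff_convex]
    have heq : (fun y : E => (f xbar y + r y) - α / 2 * ‖y‖ ^ 2)
        = fun y => (f xbar y - α / 2 * ‖y‖ ^ 2) + r y := by funext y; ring
    rw [heq]
    exact hsc.add hr
  have hG0 : StrongConvexOn univ (α + 2 * q)
      (fun y => f xbar y + r y + q * ‖y - x‖ ^ 2) := by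
    rw [strongConvexOn_iff_convex]
    have heq : (fun y : E => (f xbar y + r y + q * ‖y - x‖ ^ 2)
        - (α + 2 * q) / 2 * ‖y‖ ^ 2)
        = fun y => ((f xbar y - α / 2 * ‖y‖ ^ 2) + r y)
            + ((-(2 * q)) * ⟪y, x⟫ + q * ‖x‖ ^ 2) := by
      funext y
      have hexp : ‖y - x‖ ^ 2 = ‖y‖ ^ 2 - 2 * ⟪y, x⟫ + ‖x‖ ^ 2 := norm_sub_sq_real y x
      rw [hexp]
      ring
    rw [heq]
    exact (hsc.add hr).add (convexOn_affine_inner' x _ _)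
  -- Step 4: quadratic growth at the equilibrium
  have hQG : α / 2 * t ^ 2 ≤ (f xbar xp + r xp) - (f xbar xbar + r xbar) := by
    apply limit_helper' (by positivity)
    intro l hl0 hl1
    have hcomb := hF.2 (mem_univ xbar) (mem_univ xp)
      (show (0:ℝ) ≤ 1 - l by linarith) (le_of_lt hl0) (show (1 - l) + l = 1 by ring)
    have hmin := hxbar ((1 - l) • xbar + l • xp)
    have hdist : ‖xbar - xp‖ = t := by rw [ht_def, norm_sub_rev]
    rw [hdist] at hcomb
    simp only [smul_eq_mul] at hcomb
    have h6 : l * ((1 - l) * (α / 2 * t ^ 2))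
        ≤ l * ((f xbar xp + r xp) - (f xbar xbar + r xbar)) := by nlinarith
    exact le_of_mul_le_mul_left h6 hl0
  -- Step 5: main inequality from the prox minimization
  have hMain : (α + 2 * q) / 2 * t ^ 2 ≤
      ((f xbar xbar + r xbar + q * ‖xbar - x‖ ^ 2)
        - (f xbar xp + r xp + q * ‖xp - x‖ ^ 2)) + γ * β * s * t := by
    apply limit_helper' (by positivity)
    intro l hl0 hl1
    set yl : E := (1 - l) • xp + l • xbar with hyl_def
    have hcomb := hG0.2 (mem_univ xp) (mem_univ xbar)
      (show (0:ℝ) ≤ 1 - l by linarith) (le_of_lt hl0) (show (1 - l) + l = 1 by ring)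
    rw [← hyl_def, ← ht_def] at hcomb
    simp only [smul_eq_mul] at hcomb
    have hmin := hxp yl
    have hylxp : yl - xp = l • (xbar - xp) := by
      rw [hyl_def]
      module
    have hylnorm : ‖yl - xp‖ = l * t := by
      rw [hylxp, norm_smul, Real.norm_eq_abs, abs_of_pos hl0, norm_sub_rev, ← ht_def]
    have he := heLip yl xp
    rw [hylnorm] at he
    have he' : (f x yl - f xbar yl) - (f x xp - f xbar xp) ≤ γ * β * s * (l * t) :=
      le_trans (le_abs_self _) he
    have h7 : l * ((1 - l) * ((α + 2 * q) / 2 * t ^ 2))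
        ≤ l * (((f xbar xbar + r xbar + q * ‖xbar - x‖ ^ 2)
          - (f xbar xp + r xp + q * ‖xp - x‖ ^ 2)) + γ * β * s * t) := by
      nlinarith
    exact le_of_mul_le_mul_left h7 hl0
  -- Step 6: combine everything
  have hinner : ⟪xp - xbar, xbar - x⟫ ≥ -(t * s) := by
    have h1 := abs_real_inner_le_norm (xp - xbar) (xbar - x)
    have h2 : ‖xbar - x‖ = s := by rw [hs_def, norm_sub_rev]
    rw [h2, ← ht_def] at h1
    have := neg_abs_le ⟪xp - xbar, xbar - x⟫
    linarith
  have hexp2 : ‖xp - x‖ ^ 2 = t ^ 2 + 2 * ⟪xp - xbar, xbar - x⟫ + ‖xbar - x‖ ^ 2 := by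
    have h1 : xp - x = (xp - xbar) + (xbar - x) := by abel
    rw [h1, norm_add_sq_real, ← ht_def]
  have hbx : ‖xbar - x‖ = s := by rw [hs_def, norm_sub_rev]
  have hfinal : (α + 2 * q) * t ^ 2 ≤ 2 * q * s * t + γ * β * s * t := by
    have h1 : q * (‖xbar - x‖ ^ 2 - ‖xp - x‖ ^ 2) ≤ q * (-(t ^ 2) + 2 * t * s) := by
      apply mul_le_mul_of_nonneg_left _ (le_of_lt hq0)
      rw [hexp2, hbx]
      nlinarith [hinner]
    nlinarith [hMain, hQG, h1]
  -- conclude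
  rcases eq_or_lt_of_le ht0 with ht' | ht'
  · rw [← ht']
    have hnum : (0:ℝ) ≤ 1 + γ * η * β := by positivity
    have hden : (0:ℝ) < 1 + η * α := by positivity
    exact mul_nonneg (div_nonneg hnum (le_of_lt hden)) hs0
  · have h8 : (α + 2 * q) * t ≤ 2 * q * s + γ * β * s := by
      have h9 : ((α + 2 * q) * t) * t ≤ (2 * q * s + γ * β * s) * t := by nlinarith [hfinal]
      exact le_of_mul_le_mul_right h9 ht'
    rw [div_mul_eq_mul_div, le_div_iff₀ (by positivity : (0:ℝ) < 1 + η * α)]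
    have h10 := mul_le_mul_of_nonneg_left h8 (le_of_lt hη)
    have e1 : η * (2 * q) * t = t := by rw [hq_def]; field_simp
    have e2 : η * (2 * q) * s = s := by rw [hq_def]; field_simp
    nlinarith [h10, e1, e2]
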